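/- If an odd composite integer n is a Fermat pseudoprime to bases b and c (i.e., b^{n-1} ≡ 1 mod n and c^{n-1} ≡ 1 mod n, with gcd(bc, n) = 1), then n is a Lucas pseudoprime with parameters P ≡ b + c (mod n) and Q ≡ bc (mod n), provided the Jacobi symbol ((b-c)²/n) = 1; that is, U_{n-1}(P,Q) ≡ 0 (mod n). -/

import Mathlib

def lucasU (P Q : ℤ) : ℕ → ℤ
  | 0 => 0
  | 1 => 1
  | n + 2 => P * lucasU P Q (n + 1) - Q * lucasU P Q n

lemma lucasU_cast_mul (n : ℕ) (b c P Q : ℤ)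
    (hP : (P : ZMod n) = (b : ZMod n) + (c : ZMod n))
    (hQ : (Q : ZMod n) = (b : ZMod n) * (c : ZMod n)) :
    ∀ k, ((lucasU P Q k : ℤ) : ZMod n) * ((b : ZMod n) - (c : ZMod n))
      = (b : ZMod n) ^ k - (c : ZMod n) ^ k
  | 0 => by simp [lucasU]
  | 1 => by simp [lucasU]
  | (k + 2) => by
      have h1 := lucasU_cast_mul n b c P Q hP hQ (k + 1)
      have h2 := lucasU_cast_mul n b c P Q hP hQ k
      show ((P * lucasU P Q (k + 1) - Q * lucasU P Q k : ℤ) : ZMod n) * _ = _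
      push_cast
      rw [hP, hQ]
      linear_combination ((b : ZMod n) + (c : ZMod n)) * h1
        - ((b : ZMod n) * (c : ZMod n)) * h2

theorem psp_two_bases_lpsp (n : ℕ) (hn : 1 < n) (hcomp : ¬ n.Prime) (hodd : Odd n)
    (b c P Q : ℤ) (hcop : Int.gcd (b * c) n = 1)
    (hb : b ^ (n - 1) ≡ 1 [ZMOD n]) (hc : c ^ (n - 1) ≡ 1 [ZMOD n])
    (hjac : jacobiSym ((b - c) ^ 2) n = 1)
    (hP : P ≡ b + c [ZMOD n]) (hQ : Q ≡ b * c [ZMOD n]) :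
    (n : ℤ) ∣ lucasU P Q (n - 1) := by
  -- gcd of (b-c) with n is 1
  have hgcd2 : Int.gcd ((b - c) ^ 2) n = 1 := by
    by_contra h
    have : jacobiSym ((b - c) ^ 2) n = 0 :=
      jacobiSym.eq_zero_iff.mpr ⟨by omega, h⟩
    omega
  have hco : IsCoprime (b - c) (n : ℤ) := by
    have := Int.isCoprime_iff_gcd_eq_one.mpr hgcd2
    exact (IsCoprime.pow_left_iff (by norm_num)).mp this
  -- (b - c) is a unit in ZMod n
  obtain ⟨u, v, huv⟩ := hco
  have hunit : IsUnit ((b : ZMod n) - (c : ZMod n)) := by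
    refine IsUnit.of_mul_eq_one ((u : ZMod n)) ?_
    have : ((u * (b - c) + v * n : ℤ) : ZMod n) = ((1 : ℤ) : ZMod n) := by
      exact_mod_cast congrArg (Int.cast : ℤ → ZMod n) huv
    push_cast at this
    rw [ZMod.natCast_self] at this
    push_cast at this
    linear_combination this
  have hP' : (P : ZMod n) = (b : ZMod n) + (c : ZMod n) := by
    have := (ZMod.intCast_eq_intCast_iff _ _ _).mpr hP
    push_cast at this ⊢; exact this
  have hQ' : (Q : ZMod n) = (b : ZMod n) * (c : ZMod n) := by
    have := (ZMod.intCast_eq_intCast_iff _ _ _).mpr hQ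
    push_cast at this ⊢; exact this
  have hb' : (b : ZMod n) ^ (n - 1) = 1 := by
    have := (ZMod.intCast_eq_intCast_iff _ _ _).mpr hb
    push_cast at this; exact this
  have hc' : (c : ZMod n) ^ (n - 1) = 1 := by
    have := (ZMod.intCast_eq_intCast_iff _ _ _).mpr hc
    push_cast at this; exact this
  have key := lucasU_cast_mul n b c P Q hP' hQ' (n - 1)
  rw [hb', hc', sub_self] at key
  have : ((lucasU P Q (n - 1) : ℤ) : ZMod n) = 0 := by
    rcases hunit with ⟨w, hw⟩
    have := congrArg (· * ((w⁻¹ : (ZMod n)ˣ) : ZMod n)) key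
    simp only [zero_mul, mul_assoc, ← hw, Units.mul_inv, mul_one] at this
    exact this
  exact (ZMod.intCast_zmod_eq_zero_iff_dvd _ _).mp this
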